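/- arXiv:1309.5322 — 4 statements merged into one kernel-verified Lean document; each statement's English description precedes it below -/
import Mathlib

section
/- For every real t and k > 0, the 2×2 matrix T = exp(-iπ/4) 𝓔_k(t) [[1, i e^{-πt}], [i e^{-πt}, 1]], where 𝓔_k(t) = (2π)^{-1/2} Γ(1/2+it) exp(t(π/2 - i ln k)), is unitary. -/
open Complex in
lemma key (t k : ℝ) :
    (Complex.exp (-(Real.pi / 4 : ℝ) * Complex.I) *
        ((((2 * Real.pi) ^ (-(1 : ℝ) / 2) : ℝ) : ℂ) *
          Complex.Gamma (1 / 2 + (t : ℂ) * Complex.I) *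
          Complex.exp ((t : ℂ) * ((Real.pi / 2 : ℝ) - Complex.I * (Real.log k : ℂ))))) *
      star (Complex.exp (-(Real.pi / 4 : ℝ) * Complex.I) *
        ((((2 * Real.pi) ^ (-(1 : ℝ) / 2) : ℝ) : ℂ) *
          Complex.Gamma (1 / 2 + (t : ℂ) * Complex.I) *
          Complex.exp ((t : ℂ) * ((Real.pi / 2 : ℝ) - Complex.I * (Real.log k : ℂ)))))
      * (1 + ((Real.exp (-Real.pi * t) : ℝ) : ℂ) ^ 2) = 1 := by
  have hconjG : star (Complex.Gamma (1 / 2 + (t : ℂ) * Complex.I))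
      = Complex.Gamma (1 / 2 - (t : ℂ) * Complex.I) := by
    rw [show star (Complex.Gamma (1 / 2 + (t : ℂ) * Complex.I)) = (starRingEnd ℂ) (Complex.Gamma (1 / 2 + (t : ℂ) * Complex.I)) from rfl, ← Complex.Gamma_conj]
    congr 1
    simp [map_add, map_mul, map_div₀, map_one, Complex.conj_I, sub_eq_add_neg, map_ofNat]
  have hG : Complex.Gamma (1 / 2 + (t : ℂ) * Complex.I) *
      Complex.Gamma (1 / 2 - (t : ℂ) * Complex.I)
      = (Real.pi : ℂ) / Complex.cosh ((Real.pi : ℂ) * t) := by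
    have := Complex.Gamma_mul_Gamma_one_sub (1 / 2 + (t : ℂ) * Complex.I)
    have h1 : (1 : ℂ) - (1 / 2 + (t : ℂ) * Complex.I) = 1 / 2 - t * Complex.I := by ring
    rw [h1] at this
    rw [this]
    congr 1
    have : (Real.pi : ℂ) * (1 / 2 + (t : ℂ) * Complex.I)
        = (Real.pi : ℂ) / 2 + ((Real.pi : ℂ) * t) * Complex.I := by ring
    rw [this, add_comm, Complex.sin_add_pi_div_two, Complex.cos_mul_I]
  have hB : ((((2 * Real.pi) ^ (-(1 : ℝ) / 2) : ℝ) : ℂ)) * ((((2 * Real.pi) ^ (-(1 : ℝ) / 2) : ℝ) : ℂ)) = (((2 * Real.pi)⁻¹ : ℝ) : ℂ) := by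
    rw [← Complex.ofReal_mul, ← Real.rpow_add (by positivity)]
    norm_num [Real.rpow_neg_one]
  have hA : Complex.exp (-(Real.pi / 4 : ℝ) * Complex.I) *
      star (Complex.exp (-(Real.pi / 4 : ℝ) * Complex.I)) = 1 := by
    rw [Complex.star_def, ← Complex.exp_conj, ← Complex.exp_add, show
      (-(Real.pi / 4 : ℝ) : ℂ) * Complex.I +
        (starRingEnd ℂ) ((-(Real.pi / 4 : ℝ) : ℂ) * Complex.I) = 0 by
        simp [map_mul, Complex.conj_ofReal, Complex.conj_I, map_ofNat]]
    exact Complex.exp_zero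
  have hE : Complex.exp ((t : ℂ) * ((Real.pi / 2 : ℝ) - Complex.I * (Real.log k : ℂ))) *
      star (Complex.exp ((t : ℂ) * ((Real.pi / 2 : ℝ) - Complex.I * (Real.log k : ℂ)))) =
      ((Real.exp (Real.pi * t) : ℝ) : ℂ) := by
    rw [Complex.star_def, ← Complex.exp_conj, ← Complex.exp_add, Complex.ofReal_exp]
    congr 1
    simp [map_mul, map_sub, Complex.conj_I, Complex.conj_ofReal, map_ofNat]
    push_cast
    ring
  have hG2 : Complex.Gamma (1 / 2 + (t : ℂ) * Complex.I) *
      star (Complex.Gamma (1 / 2 + (t : ℂ) * Complex.I)) =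
      ((Real.pi / Real.cosh (Real.pi * t) : ℝ) : ℂ) := by
    rw [hconjG, hG]
    simp [Complex.ofReal_div, Complex.ofReal_cosh, Complex.ofReal_mul]
  calc (Complex.exp (-(Real.pi / 4 : ℝ) * Complex.I) *
        ((((2 * Real.pi) ^ (-(1 : ℝ) / 2) : ℝ) : ℂ) *
          Complex.Gamma (1 / 2 + (t : ℂ) * Complex.I) *
          Complex.exp ((t : ℂ) * ((Real.pi / 2 : ℝ) - Complex.I * (Real.log k : ℂ))))) *
      star (Complex.exp (-(Real.pi / 4 : ℝ) * Complex.I) *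
        ((((2 * Real.pi) ^ (-(1 : ℝ) / 2) : ℝ) : ℂ) *
          Complex.Gamma (1 / 2 + (t : ℂ) * Complex.I) *
          Complex.exp ((t : ℂ) * ((Real.pi / 2 : ℝ) - Complex.I * (Real.log k : ℂ)))))
      * (1 + ((Real.exp (-Real.pi * t) : ℝ) : ℂ) ^ 2)
      = (Complex.exp (-(Real.pi / 4 : ℝ) * Complex.I) *
          star (Complex.exp (-(Real.pi / 4 : ℝ) * Complex.I))) *
        (((((2 * Real.pi) ^ (-(1 : ℝ) / 2) : ℝ) : ℂ)) * ((((2 * Real.pi) ^ (-(1 : ℝ) / 2) : ℝ) : ℂ))) *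
        (Complex.Gamma (1 / 2 + (t : ℂ) * Complex.I) *
          star (Complex.Gamma (1 / 2 + (t : ℂ) * Complex.I))) *
        (Complex.exp ((t : ℂ) * ((Real.pi / 2 : ℝ) - Complex.I * (Real.log k : ℂ))) *
          star (Complex.exp ((t : ℂ) * ((Real.pi / 2 : ℝ) - Complex.I * (Real.log k : ℂ))))) *
        (1 + ((Real.exp (-Real.pi * t) : ℝ) : ℂ) ^ 2) := by
        simp only [star_mul', Complex.star_def, Complex.conj_ofReal]
        ring
    _ = 1 := by
        rw [hA, hB, hG2, hE]
        have hcp : 0 < Real.cosh (Real.pi * t) := Real.cosh_pos _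
        have h2 : Real.exp (Real.pi * t) * (1 + Real.exp (-Real.pi * t) ^ 2)
            = 2 * Real.cosh (Real.pi * t) := by
          rw [Real.cosh_eq, show -Real.pi * t = -(Real.pi * t) by ring, Real.exp_neg]
          have hx := Real.exp_pos (Real.pi * t)
          field_simp
        have hreal : (2 * Real.pi)⁻¹ * (Real.pi / Real.cosh (Real.pi * t)) *
            Real.exp (Real.pi * t) * (1 + Real.exp (-Real.pi * t) ^ 2) = 1 := by
          rw [mul_assoc, h2]
          have hπ : Real.pi ≠ 0 := Real.pi_ne_zero
          field_simp
        rw [one_mul]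
        exact_mod_cast hreal

/-- The transfer matrix `T = e^{-iπ/4} 𝓔_k(t) [[1, i e^{-πt}],[i e^{-πt}, 1]]`
at a hyperbolic singularity is unitary. -/
theorem stmt6 (t k : ℝ) (hk : 0 < k) :
    (Complex.exp (-(Real.pi / 4 : ℝ) * Complex.I) *
        ((((2 * Real.pi) ^ (-(1 : ℝ) / 2) : ℝ) : ℂ) *
          Complex.Gamma (1 / 2 + (t : ℂ) * Complex.I) *
          Complex.exp ((t : ℂ) * ((Real.pi / 2 : ℝ) - Complex.I * (Real.log k : ℂ))))) •
      (!![1, Complex.I * (Real.exp (-Real.pi * t) : ℝ);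
          Complex.I * (Real.exp (-Real.pi * t) : ℝ), 1] : Matrix (Fin 2) (Fin 2) ℂ)
      ∈ Matrix.unitaryGroup (Fin 2) ℂ := by
  rw [Matrix.mem_unitaryGroup_iff]
  set c : ℂ := Complex.exp (-(Real.pi / 4 : ℝ) * Complex.I) *
        ((((2 * Real.pi) ^ (-(1 : ℝ) / 2) : ℝ) : ℂ) *
          Complex.Gamma (1 / 2 + (t : ℂ) * Complex.I) *
          Complex.exp ((t : ℂ) * ((Real.pi / 2 : ℝ) - Complex.I * (Real.log k : ℂ)))) with hc
  set M : Matrix (Fin 2) (Fin 2) ℂ :=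
    !![1, Complex.I * (Real.exp (-Real.pi * t) : ℝ);
       Complex.I * (Real.exp (-Real.pi * t) : ℝ), 1] with hMdef
  have hM : M * star M = (1 + ((Real.exp (-Real.pi * t) : ℝ) : ℂ) ^ 2) • 1 := by
    have hstar : star M = !![1, -(Complex.I * (Real.exp (-Real.pi * t) : ℝ));
        -(Complex.I * (Real.exp (-Real.pi * t) : ℝ)), 1] := by
      rw [Matrix.star_eq_conjTranspose, hMdef]
      ext i j
      fin_cases i <;> fin_cases j <;>
        simp [Matrix.conjTranspose_apply, Complex.conj_ofReal, Complex.conj_I, -Complex.ofReal_exp] <;> ring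
    rw [hstar, hMdef, Matrix.mul_fin_two]
    ext i j
    fin_cases i <;> fin_cases j <;>
      simp [Matrix.one_apply, Complex.I_mul_I] <;> ring_nf <;>
      simp [Complex.I_sq] <;> ring
  rw [star_smul, Matrix.smul_mul, Matrix.mul_smul, smul_smul, hM, smul_smul]
  rw [key t k, one_smul]
end

section
/- Let U = [[a, b], [c, d]] be a 2×2 unitary matrix with a ≠ 1 possible and det U = ad − bc. Then 1 is an eigenvalue of U if and only if 1 − (a + d) + det U = 0, which (writing det U = e^{iφ} and using unitarity d = e^{iφ} \bar{a}) is equivalent to the real scalar equation |a| sin((φ − π)/2 − arg a) = sin((φ − π)/2), up to the appropriate choice of branch of arg when a ≠ 0. -/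
/-- For a 2×2 unitary `U = [[a,b],[c,d]]`: `1` is an eigenvalue of `U` iff
`1 - (a+d) + det U = 0`; unitarity gives `d = det U · conj a`; and (when `a ≠ 0`)
the condition is equivalent to the real scalar equation
`|a| sin((φ-π)/2 - arg a) = sin((φ-π)/2)` with `φ = arg det U`. -/
theorem stmt7 (U : Matrix (Fin 2) (Fin 2) ℂ)
    (hU : U ∈ Matrix.unitaryGroup (Fin 2) ℂ) (ha : U 0 0 ≠ 0) :
    ((∃ v : Fin 2 → ℂ, v ≠ 0 ∧ U.mulVec v = v) ↔
      1 - (U 0 0 + U 1 1) + U.det = 0) ∧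
    U 1 1 = U.det * (starRingEnd ℂ) (U 0 0) ∧
    ((1 - (U 0 0 + U 1 1) + U.det = 0) ↔
      ‖U 0 0‖ *
          Real.sin ((Complex.arg U.det - Real.pi) / 2 - Complex.arg (U 0 0))
        = Real.sin ((Complex.arg U.det - Real.pi) / 2)) := by
  have hUs : U * star U = 1 := hU.2
  have h1 := congr_fun (congr_fun hUs 0) 0
  have h2 := congr_fun (congr_fun hUs 1) 0
  simp [Matrix.mul_apply, Fin.sum_univ_two, Matrix.one_apply, Matrix.star_apply,
    Complex.star_def] at h1 h2
  have hdet2 : U.det = U 0 0 * U 1 1 - U 0 1 * U 1 0 := Matrix.det_fin_two U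
  have hd : U 1 1 = U.det * (starRingEnd ℂ) (U 0 0) := by
    rw [hdet2]; linear_combination U 0 1 * h2 - U 1 1 * h1
  -- part 1
  have part1 : (∃ v : Fin 2 → ℂ, v ≠ 0 ∧ U.mulVec v = v) ↔
      1 - (U 0 0 + U 1 1) + U.det = 0 := by
    have hiff : ∀ v : Fin 2 → ℂ, U.mulVec v = v ↔ (U - 1).mulVec v = 0 := by
      intro v
      rw [Matrix.sub_mulVec, Matrix.one_mulVec, sub_eq_zero]
    have hdetsub : (U - 1).det = 1 - (U 0 0 + U 1 1) + U.det := by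
      rw [Matrix.det_fin_two, hdet2]
      simp [Matrix.sub_apply, Matrix.one_apply]
      ring
    rw [← hdetsub, ← Matrix.exists_mulVec_eq_zero_iff]
    exact exists_congr fun v => and_congr_right fun _ => hiff v
  refine ⟨part1, hd, ?_⟩
  -- part 3
  have hdu : U.det ∈ unitary ℂ := Matrix.det_of_mem_unitary hU
  have habs : ‖U.det‖ = 1 := by
    have hst := hdu.1
    have hn : Complex.normSq U.det = 1 := by
      rw [Complex.star_def] at hst
      have : (Complex.normSq U.det : ℂ) = 1 := by
        rw [← Complex.mul_conj]; linear_combination hst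
      exact_mod_cast this
    have hsq := Complex.sq_norm U.det
    nlinarith [norm_nonneg U.det]
  set φ := Complex.arg U.det with hφ
  set α := Complex.arg (U 0 0) with hα
  set r := ‖U 0 0‖ with hr
  have hδre : U.det.re = Real.cos φ := by
    have hne : U.det ≠ 0 := by
      intro h; rw [h] at habs; simp at habs
    rw [Complex.cos_arg hne, habs, div_one]
  have hδim : U.det.im = Real.sin φ := by
    rw [Complex.sin_arg, habs, div_one]
  have h0 : ‖U 0 0‖ ≠ 0 := norm_ne_zero_iff.mpr ha
  have hare : (U 0 0).re = r * Real.cos α := by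
    rw [Complex.cos_arg ha]; field_simp [h0]; rfl
  have haim : (U 0 0).im = r * Real.sin α := by
    rw [Complex.sin_arg]; field_simp [h0]; rfl
  -- abbreviations for half angle
  set s := Real.sin (φ / 2) with hs
  set c := Real.cos (φ / 2) with hc
  have hpyth : s ^ 2 + c ^ 2 = 1 := Real.sin_sq_add_cos_sq (φ / 2)
  have hcosφ : Real.cos φ = c ^ 2 - s ^ 2 := by
    have : φ = φ / 2 + φ / 2 := by ring
    rw [this, Real.cos_add]; ring
  have hsinφ : Real.sin φ = 2 * s * c := by
    have : φ = φ / 2 + φ / 2 := by ring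
    rw [this, Real.sin_add]; ring
  -- the target real equation rewritten
  have htarget : (r * Real.sin ((φ - Real.pi) / 2 - α) = Real.sin ((φ - Real.pi) / 2)) ↔
      r * (c * Real.cos α + s * Real.sin α) = c := by
    rw [show (φ - Real.pi) / 2 - α = (φ / 2 - α) - Real.pi / 2 by ring,
      show (φ - Real.pi) / 2 = φ / 2 - Real.pi / 2 by ring,
      Real.sin_sub_pi_div_two, Real.sin_sub_pi_div_two, Real.cos_sub]
    constructor <;> intro h <;> linarith [h]
  rw [htarget, hd]
  rw [Complex.ext_iff]
  simp only [Complex.add_re, Complex.add_im, Complex.sub_re, Complex.sub_im, Complex.one_re,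
    Complex.one_im, Complex.mul_re, Complex.mul_im, Complex.conj_re, Complex.conj_im,
    Complex.zero_re, Complex.zero_im]
  rw [hδre, hδim, hare, haim, hcosφ, hsinφ]
  constructor
  · rintro ⟨hre, him⟩
    have hA : 2 * c * (c - r * (c * Real.cos α + s * Real.sin α)) = 0 := by
      linear_combination hre + (1 - r * Real.cos α) * hpyth
    have hB : 2 * s * (c - r * (c * Real.cos α + s * Real.sin α)) = 0 := by
      linear_combination him + (- r * Real.sin α) * hpyth
    rcases eq_or_ne c 0 with hc0 | hc0
    · have hs0 : s ≠ 0 := by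
        intro h0; rw [hc0, h0] at hpyth; norm_num at hpyth
      rcases mul_eq_zero.mp hB with h | h
      · exfalso; exact hs0 (by linarith)
      · linarith
    · rcases mul_eq_zero.mp hA with h | h
      · exfalso; exact hc0 (by linarith)
      · linarith
  · intro h
    constructor
    · linear_combination (-2*c) * h - (1 - r * Real.cos α) * hpyth
    · linear_combination (-2*s) * h + (r * Real.sin α) * hpyth
end

section
/- Let A be the (2k)×(2k) real symmetric circulant-like tridiagonal matrix (with corner entries) with diagonal entries 2cos(ℓπ/k), ℓ = 0,…,2k−1, off-diagonal entries 1 on the first super- and sub-diagonal, and entries 1 in positions (1,2k) and (2k,1). Then the spectrum of A is symmetric about 0: if λ is an eigenvalue of A then so is −λ. -/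
/-- The spectrum of Harper's matrix (the `2k × 2k` tridiagonal matrix with corner
entries, diagonal `2cos(ℓπ/k)` and off-diagonal/corner entries `1`) is symmetric
about `0`. -/
theorem stmt15 (k : ℕ) (hk : 0 < k) (A : Matrix (Fin (2 * k)) (Fin (2 * k)) ℝ)
    (hA : ∀ i j : Fin (2 * k), A i j =
      (if i = j then 2 * Real.cos ((i : ℕ) * Real.pi / k) else 0) +
      (if (j : ℕ) = ((i : ℕ) + 1) % (2 * k) ∨ (i : ℕ) = ((j : ℕ) + 1) % (2 * k)
        then 1 else 0))
    (lam : ℝ) (hlam : ∃ v : Fin (2 * k) → ℝ, v ≠ 0 ∧ A.mulVec v = lam • v) :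
    ∃ w : Fin (2 * k) → ℝ, w ≠ 0 ∧ A.mulVec w = (-lam) • w := by
  obtain ⟨v, hv, hAv⟩ := hlam
  have h2k : 1 < 2 * k := by omega
  haveI : NeZero (2 * k) := ⟨by omega⟩
  set K : Fin (2 * k) := ⟨k, by omega⟩ with hK
  set σ : Fin (2 * k) → ℝ := fun i => (-1 : ℝ) ^ (i : ℕ) with hσdef
  have hσne : ∀ i, σ i ≠ 0 := by
    intro i
    simp [hσdef]
  -- (-1)^(m % 2k) = (-1)^m
  have hpow : ∀ m : ℕ, ((-1 : ℝ)) ^ (m % (2 * k)) = (-1 : ℝ) ^ m := by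
    intro m
    rw [neg_one_pow_eq_pow_mod_two, Nat.mod_mod_of_dvd m ⟨k, rfl⟩,
      ← neg_one_pow_eq_pow_mod_two]
  have hval1 : ∀ i : Fin (2 * k), ((i + 1 : Fin (2 * k)) : ℕ) = ((i : ℕ) + 1) % (2 * k) := by
    intro i
    simp [Fin.add_def, Fin.val_one', Nat.mod_eq_of_lt h2k]
  have hσ1 : ∀ i : Fin (2 * k), σ (i + 1) = -σ i := by
    intro i
    simp only [hσdef, hval1, hpow, pow_succ]
    ring
  -- adjacency as Fin equation
  have hadj : ∀ i j : Fin (2 * k), ((j : ℕ) = ((i : ℕ) + 1) % (2 * k)) ↔ j = i + 1 := by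
    intro i j
    rw [Fin.ext_iff, hval1]
  -- cosine shift
  have hcosK : ∀ i : Fin (2 * k),
      Real.cos ((((i + K : Fin (2 * k)) : ℕ) : ℝ) * Real.pi / k)
        = -Real.cos (((i : ℕ) : ℝ) * Real.pi / k) := by
    intro i
    have hvK : ((i + K : Fin (2 * k)) : ℕ) = ((i : ℕ) + k) % (2 * k) := by
      simp [Fin.add_def, hK]
    have hkR : (k : ℝ) ≠ 0 := Nat.cast_ne_zero.mpr (by omega)
    rcases lt_or_ge ((i : ℕ) + k) (2 * k) with h | h
    · rw [hvK, Nat.mod_eq_of_lt h]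
      have : (((i : ℕ) + k : ℕ) : ℝ) * Real.pi / k = ((i : ℕ) : ℝ) * Real.pi / k + Real.pi := by
        push_cast
        field_simp
      rw [this, Real.cos_add]
      simp
    · have hlt : (i : ℕ) + k - 2 * k < 2 * k := by
        have := i.isLt
        omega
      rw [hvK, Nat.mod_eq_sub_mod h, Nat.mod_eq_of_lt hlt]
      have hke : (i : ℕ) + k - 2 * k = (i : ℕ) - k := by omega
      have hki : k ≤ (i : ℕ) := by omega
      rw [hke]
      have : (((i : ℕ) - k : ℕ) : ℝ) * Real.pi / k = ((i : ℕ) : ℝ) * Real.pi / k - Real.pi := by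
        rw [Nat.cast_sub hki]
        field_simp
      rw [this, Real.cos_sub]
      simp
  -- entrywise symmetry
  have hE : ∀ i j : Fin (2 * k), A i j * σ j = -σ i * A (i + K) (j + K) := by
    intro i j
    rw [hA i j, hA (i + K) (j + K)]
    have c1 : (i = j) ↔ (i + K = j + K) := by
      constructor
      · rintro rfl; rfl
      · intro h; exact add_right_cancel h
    have cshift : ∀ a b : Fin (2 * k), a + K = b + K + 1 ↔ a = b + 1 := by
      intro a b
      rw [add_right_comm b K 1]
      constructor
      · intro h; exact add_right_cancel h
      · rintro rfl; rfl
    have c2 : ((j : ℕ) = ((i : ℕ) + 1) % (2 * k) ∨ (i : ℕ) = ((j : ℕ) + 1) % (2 * k)) ↔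
        (((j + K : Fin (2 * k)) : ℕ) = (((i + K : Fin (2 * k)) : ℕ) + 1) % (2 * k) ∨
         ((i + K : Fin (2 * k)) : ℕ) = (((j + K : Fin (2 * k)) : ℕ) + 1) % (2 * k)) := by
      rw [hadj, hadj, hadj, hadj, cshift, cshift]
    by_cases hij : i = j
    · subst hij
      have hne : ¬ ((i : ℕ) = ((i : ℕ) + 1) % (2 * k) ∨ (i : ℕ) = ((i : ℕ) + 1) % (2 * k)) := by
        rw [hadj]
        simp only [or_self]
        intro h
        have : (1 : Fin (2 * k)) = 0 := by
          have := h.symm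
          nth_rewrite 2 [show i = i + 0 from (add_zero i).symm] at this
          exact add_left_cancel this
        have h1 : ((1 : Fin (2 * k)) : ℕ) = 1 := by
          simp [Fin.val_one', Nat.mod_eq_of_lt h2k]
        rw [this] at h1
        simp at h1
      rw [if_pos rfl, if_pos (c1.mp rfl), if_neg hne, if_neg (fun h => hne (c2.mpr h))]
      rw [hcosK i]
      ring
    · have hijK : ¬ (i + K = j + K) := fun h => hij (c1.mpr h)
      rw [if_neg hij, if_neg hijK]
      by_cases hadj2 : (j : ℕ) = ((i : ℕ) + 1) % (2 * k) ∨ (i : ℕ) = ((j : ℕ) + 1) % (2 * k)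
      · rw [if_pos hadj2, if_pos (c2.mp hadj2)]
        have hσij : σ j = -σ i := by
          rcases hadj2 with h | h
          · rw [hadj] at h; rw [h, hσ1]
          · rw [hadj] at h
            have h2 := hσ1 j
            rw [← h] at h2
            linarith
        rw [hσij]
        ring
      · rw [if_neg hadj2, if_neg (fun h => hadj2 (c2.mpr h))]
        ring
  refine ⟨fun i => σ i * v (i + K), ?_, ?_⟩
  · intro h
    apply hv
    funext m
    have hm := congrFun h (m - K)
    simp only [Pi.zero_apply, sub_add_cancel] at hm
    rcases mul_eq_zero.mp hm with h0 | h0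
    · exact absurd h0 (hσne _)
    · exact h0
  · funext i
    have hmul := congrFun hAv (i + K)
    simp only [Matrix.mulVec, dotProduct, Pi.smul_apply, smul_eq_mul] at hmul ⊢
    calc ∑ j, A i j * (σ j * v (j + K))
        = ∑ j, -σ i * (A (i + K) (j + K) * v (j + K)) := by
          refine Finset.sum_congr rfl fun j _ => ?_
          rw [← mul_assoc, hE i j, mul_assoc]
      _ = -σ i * ∑ j, A (i + K) (j + K) * v (j + K) := by rw [Finset.mul_sum]
      _ = -σ i * ∑ m, A (i + K) m * v m := by
          rw [← Equiv.sum_comp (Equiv.addRight K) (fun m => A (i + K) m * v m)]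
          rfl
      _ = -σ i * (lam * v (i + K)) := by rw [hmul]
      _ = -lam * (σ i * v (i + K)) := by ring
end

section
/- Let ε_S, ε_N ∈ ℝ, θ₁, θ₂, θ₃ ∈ ℝ, and let T(ε) = exp(−iπ/4) 𝓔(ε) [[1, i e^{−πε}], [i e^{−πε}, 1]] where 𝓔(ε) = (2π)^{−1/2} Γ(1/2 + iε) e^{ε(π/2 − i ln k)} (so T(ε) is unitary). Define U = T(ε_S) · [[0, e^{−iθ₁}], [e^{−iθ₂}, 0]] · T(ε_N) · [[0, e^{−iθ₃}], [1, 0]]. Then U is unitary and its (1,1) entry a satisfies |a|² = (1 − 2cos(θ₂ − θ₁) e^{−π(ε_S + ε_N)} + e^{−2π(ε_S + ε_N)}) / ((1 + e^{−2πε_S})(1 + e^{−2πε_N})). -/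
open Complex Real

lemma gamma_half_normSq (ε : ℝ) :
    Complex.normSq (Complex.Gamma (1 / 2 + (ε : ℂ) * Complex.I)) =
      Real.pi / Real.cosh (Real.pi * ε) := by
  have h1 : (1 : ℂ) - (1 / 2 + (ε : ℂ) * Complex.I) =
      (starRingEnd ℂ) (1 / 2 + (ε : ℂ) * Complex.I) := by
    simp [Complex.ext_iff]; norm_num
  have h2 : Complex.Gamma (1 / 2 + (ε : ℂ) * Complex.I) *
      Complex.Gamma (1 - (1 / 2 + (ε : ℂ) * Complex.I)) =
      (Real.pi : ℂ) / Complex.sin ((Real.pi : ℂ) * (1 / 2 + (ε : ℂ) * Complex.I)) :=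
    Complex.Gamma_mul_Gamma_one_sub _
  rw [h1, Complex.Gamma_conj, Complex.mul_conj] at h2
  have h3 : Complex.sin ((Real.pi : ℂ) * (1 / 2 + (ε : ℂ) * Complex.I)) =
      (Real.cosh (Real.pi * ε) : ℂ) := by
    have : (Real.pi : ℂ) * (1 / 2 + (ε : ℂ) * Complex.I) =
        (Real.pi : ℂ) / 2 + ((Real.pi * ε : ℝ) : ℂ) * Complex.I := by push_cast; ring
    rw [this, Complex.sin_add, Complex.sin_pi_div_two, Complex.cos_pi_div_two,
      Complex.cos_mul_I, Complex.ofReal_cosh]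
    ring
  rw [h3] at h2
  have := congrArg Complex.re h2
  rw [← Complex.ofReal_div] at this
  simpa only [Complex.ofReal_re] using this

lemma normSq_exp' (z : ℂ) : Complex.normSq (Complex.exp z) = Real.exp (2 * z.re) := by
  rw [← Complex.sq_norm, Complex.norm_exp, ← Real.exp_nat_mul]
  norm_num

lemma scalar_key (k ε : ℝ) :
    Complex.normSq (Complex.exp (-(Real.pi / 4 : ℝ) * Complex.I) *
        ((((2 * Real.pi) ^ (-(1 : ℝ) / 2) : ℝ) : ℂ) *
          Complex.Gamma (1 / 2 + (ε : ℂ) * Complex.I) *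
          Complex.exp ((ε : ℂ) * ((Real.pi / 2 : ℝ) - Complex.I * (Real.log k : ℂ))))) =
      1 / (1 + Real.exp (-2 * Real.pi * ε)) := by
  rw [Complex.normSq_mul, Complex.normSq_mul, Complex.normSq_mul, normSq_exp', normSq_exp',
    gamma_half_normSq, Complex.normSq_ofReal]
  have h1 : ((-(Real.pi / 4 : ℝ) : ℂ) * Complex.I).re = 0 := by simp
  have h2 : ((ε : ℂ) * ((Real.pi / 2 : ℝ) - Complex.I * (Real.log k : ℂ))).re = ε * (Real.pi / 2) := by
    simp [Complex.mul_re]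
  rw [h1, h2]
  have h3 : (2 * Real.pi) ^ (-(1 : ℝ) / 2) * (2 * Real.pi) ^ (-(1 : ℝ) / 2) =
      (2 * Real.pi)⁻¹ := by
    rw [← Real.rpow_add (by positivity)]
    norm_num [Real.rpow_neg_one]
  rw [h3, Real.cosh_eq]
  have hπ : (0:ℝ) < Real.pi := Real.pi_pos
  have hab : Real.exp (Real.pi * ε) * Real.exp (-(Real.pi * ε)) = 1 := by
    rw [← Real.exp_add]; simp
  have h4 : Real.exp (2 * (ε * (Real.pi / 2))) = Real.exp (Real.pi * ε) := by ring_nf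
  have h5 : Real.exp (-2 * Real.pi * ε) = Real.exp (-(Real.pi * ε)) * Real.exp (-(Real.pi * ε)) := by
    rw [← Real.exp_add]; ring_nf
  rw [h4, h5]
  have hd : 0 < Real.exp (Real.pi * ε) + Real.exp (-(Real.pi * ε)) := by positivity
  have hd2 : 0 < 1 + Real.exp (-(Real.pi * ε)) * Real.exp (-(Real.pi * ε)) := by positivity
  field_simp
  simp only [mul_zero, Real.exp_zero, one_mul]
  linear_combination Real.exp (-(Real.pi * ε)) * hab

lemma scalar_key' (k ε : ℝ) :
    (Complex.exp (-(Real.pi / 4 : ℝ) * Complex.I) *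
        ((((2 * Real.pi) ^ (-(1 : ℝ) / 2) : ℝ) : ℂ) *
          Complex.Gamma (1 / 2 + (ε : ℂ) * Complex.I) *
          Complex.exp ((ε : ℂ) * ((Real.pi / 2 : ℝ) - Complex.I * (Real.log k : ℂ))))) *
      (starRingEnd ℂ) (Complex.exp (-(Real.pi / 4 : ℝ) * Complex.I) *
        ((((2 * Real.pi) ^ (-(1 : ℝ) / 2) : ℝ) : ℂ) *
          Complex.Gamma (1 / 2 + (ε : ℂ) * Complex.I) *
          Complex.exp ((ε : ℂ) * ((Real.pi / 2 : ℝ) - Complex.I * (Real.log k : ℂ))))) *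
      (1 + ((Real.exp (-Real.pi * ε) : ℝ) : ℂ) * ((Real.exp (-Real.pi * ε) : ℝ) : ℂ)) = 1 := by
  rw [Complex.mul_conj]
  have hq : ((Real.exp (-Real.pi * ε) : ℝ) : ℂ) * ((Real.exp (-Real.pi * ε) : ℝ) : ℂ)
      = ((Real.exp (-2 * Real.pi * ε) : ℝ) : ℂ) := by
    rw [← Complex.ofReal_mul, ← Real.exp_add,
      show -Real.pi * ε + -Real.pi * ε = -2 * Real.pi * ε by ring]
  have hpos : (0:ℝ) < 1 + Real.exp (-2 * Real.pi * ε) := by positivity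
  have h2 : Complex.normSq (Complex.exp (-(Real.pi / 4 : ℝ) * Complex.I) *
        ((((2 * Real.pi) ^ (-(1 : ℝ) / 2) : ℝ) : ℂ) *
          Complex.Gamma (1 / 2 + (ε : ℂ) * Complex.I) *
          Complex.exp ((ε : ℂ) * ((Real.pi / 2 : ℝ) - Complex.I * (Real.log k : ℂ))))) *
      (1 + Real.exp (-2 * Real.pi * ε)) = 1 := by
    rw [scalar_key k ε]; field_simp
  rw [hq, show (1:ℂ) + ((Real.exp (-2 * Real.pi * ε) : ℝ) : ℂ)
      = ((1 + Real.exp (-2 * Real.pi * ε) : ℝ) : ℂ) by push_cast; ring,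
    ← Complex.ofReal_mul, h2, Complex.ofReal_one]

lemma T_unitary (c : ℂ) (q : ℝ)
    (h : c * (starRingEnd ℂ) c * (1 + (q:ℂ) * (q:ℂ)) = 1) :
    (c • !![(1:ℂ), Complex.I * (q:ℂ); Complex.I * (q:ℂ), 1]) ∈
      Matrix.unitaryGroup (Fin 2) ℂ := by
  rw [Matrix.mem_unitaryGroup_iff]
  ext i j
  fin_cases i <;> fin_cases j <;>
    simp [Matrix.mul_apply, Fin.sum_univ_two, Matrix.star_eq_conjTranspose,
      Matrix.conjTranspose_apply, Matrix.one_apply, map_mul, Complex.conj_I,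
      Complex.conj_ofReal] <;>
    first
      | linear_combination h - (c * (starRingEnd ℂ) c * (q:ℂ)^2) * Complex.I_mul_I
      | ring

lemma P_unitary (a b : ℂ) (ha : Complex.normSq a = 1) (hb : Complex.normSq b = 1) :
    !![(0:ℂ), a; b, 0] ∈ Matrix.unitaryGroup (Fin 2) ℂ := by
  rw [Matrix.mem_unitaryGroup_iff]
  ext i j
  fin_cases i <;> fin_cases j <;>
    simp [Matrix.mul_apply, Fin.sum_univ_two, Matrix.star_eq_conjTranspose,
      Matrix.conjTranspose_apply, Matrix.one_apply, Complex.mul_conj, ha, hb]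

lemma normSq_exp_neg_I_mul (θ : ℝ) : Complex.normSq (Complex.exp (-Complex.I * θ)) = 1 := by
  rw [normSq_exp']
  simp

lemma U00 (cS cN a b d : ℂ) (qS qN : ℝ) :
    ((cS • !![(1:ℂ), Complex.I * (qS:ℂ); Complex.I * (qS:ℂ), 1]) * !![(0:ℂ), a; b, 0] *
        (cN • !![(1:ℂ), Complex.I * (qN:ℂ); Complex.I * (qN:ℂ), 1]) *
        !![(0:ℂ), d; 1, 0]) 0 0
      = cS * cN * (a - (qS:ℂ) * (qN:ℂ) * b) := by
  simp [Matrix.mul_apply, Fin.sum_univ_two, Matrix.smul_apply]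
  linear_combination (cS * cN * (qS:ℂ) * (qN:ℂ) * b) * Complex.I_mul_I

lemma normSq_diff (θ₁ θ₂ r : ℝ) :
    Complex.normSq (Complex.exp (-Complex.I * θ₁) - (r:ℂ) * Complex.exp (-Complex.I * θ₂)) =
      1 - 2 * Real.cos (θ₂ - θ₁) * r + r ^ 2 := by
  rw [Complex.normSq_sub, Complex.normSq_mul, normSq_exp', normSq_exp', Complex.normSq_ofReal]
  have h1 : (-Complex.I * (θ₁:ℂ)).re = 0 := by simp
  have h2 : (-Complex.I * (θ₂:ℂ)).re = 0 := by simp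
  rw [h1, h2]
  have h3 : (Complex.exp (-Complex.I * θ₁) *
      (starRingEnd ℂ) ((r:ℂ) * Complex.exp (-Complex.I * θ₂))).re = r * Real.cos (θ₂ - θ₁) := by
    rw [map_mul, ← Complex.exp_conj, Complex.conj_ofReal]
    have hc : (starRingEnd ℂ) (-Complex.I * (θ₂:ℂ)) = Complex.I * θ₂ := by
      simp [map_mul, Complex.conj_I, Complex.conj_ofReal]
    rw [hc]
    have hm : Complex.exp (-Complex.I * θ₁) * ((r:ℂ) * Complex.exp (Complex.I * θ₂)) =
        (r:ℂ) * Complex.exp (((θ₂ - θ₁ : ℝ) : ℂ) * Complex.I) := by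
      rw [show (((θ₂ - θ₁ : ℝ) : ℂ) * Complex.I) = -Complex.I * θ₁ + Complex.I * θ₂ by
        push_cast; ring, Complex.exp_add]
      ring
    rw [hm, Complex.mul_re]
    simp only [Complex.exp_ofReal_mul_I_re, Complex.ofReal_re, Complex.ofReal_im,
      zero_mul, sub_zero]
  rw [h3]
  simp [Real.exp_zero]
  ring




open Complex in
/-- The monodromy matrix `U = T(ε_S)·[[0,e^{−iθ₁}],[e^{−iθ₂},0]]·T(ε_N)·[[0,e^{−iθ₃}],[1,0]]`
built from the hyperbolic transfer matrices is unitary, and its `(1,1)` entry `a` satisfies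
`|a|² = (1 − 2cos(θ₂−θ₁)e^{−π(ε_S+ε_N)} + e^{−2π(ε_S+ε_N)}) /
((1+e^{−2πε_S})(1+e^{−2πε_N}))`. -/
theorem stmt17 (k : ℝ) (hk : 0 < k) (εS εN θ₁ θ₂ θ₃ : ℝ) :
    ∀ T : ℝ → Matrix (Fin 2) (Fin 2) ℂ,
    (∀ ε : ℝ, T ε =
      (Complex.exp (-(Real.pi / 4 : ℝ) * Complex.I) *
        ((((2 * Real.pi) ^ (-(1 : ℝ) / 2) : ℝ) : ℂ) *
          Complex.Gamma (1 / 2 + (ε : ℂ) * Complex.I) *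
          Complex.exp ((ε : ℂ) * ((Real.pi / 2 : ℝ) - Complex.I * (Real.log k : ℂ))))) •
      !![1, Complex.I * (Real.exp (-Real.pi * ε) : ℝ);
         Complex.I * (Real.exp (-Real.pi * ε) : ℝ), 1]) →
    ∀ U : Matrix (Fin 2) (Fin 2) ℂ,
    U = T εS * !![0, Complex.exp (-Complex.I * (θ₁ : ℂ));
                  Complex.exp (-Complex.I * (θ₂ : ℂ)), 0] *
        T εN * !![0, Complex.exp (-Complex.I * (θ₃ : ℂ)); 1, 0] →
    U ∈ Matrix.unitaryGroup (Fin 2) ℂ ∧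
    ‖U 0 0‖ ^ 2 =
      (1 - 2 * Real.cos (θ₂ - θ₁) * Real.exp (-Real.pi * (εS + εN))
          + Real.exp (-2 * Real.pi * (εS + εN))) /
        ((1 + Real.exp (-2 * Real.pi * εS)) * (1 + Real.exp (-2 * Real.pi * εN))) := by
  intro T hT U hU
  constructor
  · rw [hU]
    refine mul_mem (mul_mem (mul_mem ?_ ?_) ?_) ?_
    · rw [hT εS]; exact T_unitary _ _ (scalar_key' k εS)
    · exact P_unitary _ _ (normSq_exp_neg_I_mul θ₁) (normSq_exp_neg_I_mul θ₂)
    · rw [hT εN]; exact T_unitary _ _ (scalar_key' k εN)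
    · exact P_unitary _ _ (normSq_exp_neg_I_mul θ₃) (by simp)
  · rw [hU, hT εS, hT εN, U00, Complex.sq_norm, Complex.normSq_mul, Complex.normSq_mul,
      scalar_key k εS, scalar_key k εN, ← Complex.ofReal_mul, normSq_diff]
    have h1 : Real.exp (-Real.pi * εS) * Real.exp (-Real.pi * εN) =
        Real.exp (-Real.pi * (εS + εN)) := by
      rw [← Real.exp_add]; ring_nf
    have h2 : Real.exp (-Real.pi * (εS + εN)) ^ 2 = Real.exp (-2 * Real.pi * (εS + εN)) := by
      rw [sq, ← Real.exp_add,
        show -Real.pi * (εS + εN) + -Real.pi * (εS + εN) = -2 * Real.pi * (εS + εN) by ring]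
    rw [h1, h2]
    have hS : (0:ℝ) < 1 + Real.exp (-2 * Real.pi * εS) := by positivity
    have hN : (0:ℝ) < 1 + Real.exp (-2 * Real.pi * εN) := by positivity
    field_simp
end
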